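/- Let 𝒜, 𝔅 be commutative Banach algebras, R : 𝔅 → 𝒜 a surjective continuous algebra homomorphism whose adjoint R* : 𝒜* → 𝔅* is bounded below (i.e. an isomorphism onto its range). If T ∈ 𝒜* is almost periodic, then R*(T) is almost periodic in 𝔅*. Conversely, if R admits a bounded right inverse map on bounded sets (every u ∈ 𝒜 with ‖u‖ ≤ 1 lifts to v ∈ 𝔅 with ‖v‖ ≤ C+1 and R(v) = u), then R*(T) ∈ AP(𝔅) implies T ∈ AP(𝒜). -/

import Mathlib

open NormedSpace

/-- The dual module action: `⟨u·T, v⟩ = ⟨T, v * u⟩`. -/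
noncomputable def dualAct {A : Type*} [NormedCommRing A] [NormedAlgebra ℂ A]
    (u : A) (T : StrongDual ℂ A) : StrongDual ℂ A :=
  T.comp ((ContinuousLinearMap.mul ℂ A).flip u)

/-- `T` is almost periodic. -/
def IsAP {A : Type*} [NormedCommRing A] [NormedAlgebra ℂ A] (T : StrongDual ℂ A) : Prop :=
  IsCompact (closure {S : StrongDual ℂ A | ∃ u : A, ‖u‖ ≤ 1 ∧ S = dualAct u T})

lemma dualAct_apply {A : Type*} [NormedCommRing A] [NormedAlgebra ℂ A]
    (u : A) (T : StrongDual ℂ A) (w : A) : dualAct u T w = T (w * u) := rfl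

lemma dualAct_smul {A : Type*} [NormedCommRing A] [NormedAlgebra ℂ A]
    (m : ℂ) (u : A) (T : StrongDual ℂ A) : dualAct (m • u) T = m • dualAct u T := by
  ext w
  simp [dualAct_apply, mul_smul_comm]

/-- Scaled orbits of an almost periodic functional have compact closure. -/
lemma isCompact_closure_orbit_scaled {A : Type*} [NormedCommRing A] [NormedAlgebra ℂ A]
    (T : StrongDual ℂ A) (hT : IsAP T) (r : ℝ) :
    IsCompact (closure {S : StrongDual ℂ A | ∃ u : A, ‖u‖ ≤ r ∧ S = dualAct u T}) := by
  set m : ℝ := max r 1 with hmdef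
  have hm : 0 < m := lt_of_lt_of_le one_pos (le_max_right _ _)
  have hmC : ((m : ℂ)) ≠ 0 := by
    simp only [ne_eq, Complex.ofReal_eq_zero]
    exact ne_of_gt hm
  have hcomp : IsCompact ((fun S : StrongDual ℂ A => (m : ℂ) • S) ''
      closure {S : StrongDual ℂ A | ∃ u : A, ‖u‖ ≤ 1 ∧ S = dualAct u T}) :=
    hT.image (continuous_const_smul _)
  have hsub : {S : StrongDual ℂ A | ∃ u : A, ‖u‖ ≤ r ∧ S = dualAct u T} ⊆
      (fun S : StrongDual ℂ A => (m : ℂ) • S) ''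
      closure {S : StrongDual ℂ A | ∃ u : A, ‖u‖ ≤ 1 ∧ S = dualAct u T} := by
    rintro S ⟨u, hu, rfl⟩
    refine ⟨dualAct ((m : ℂ)⁻¹ • u) T, subset_closure ⟨(m : ℂ)⁻¹ • u, ?_, rfl⟩, ?_⟩
    · rw [norm_smul, norm_inv, Complex.norm_real, Real.norm_of_nonneg hm.le]
      rw [inv_mul_le_iff₀ hm, mul_one]
      exact hu.trans (le_max_left _ _)
    · simp only [← dualAct_smul, smul_inv_smul₀ hmC]
  exact hcomp.of_isClosed_subset isClosed_closure
    (closure_minimal hsub hcomp.isClosed)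

/-- Precomposition with `R` as a continuous linear map between dual spaces. -/
noncomputable def precompDual {A B : Type*} [NormedCommRing A] [NormedAlgebra ℂ A]
    [NormedCommRing B] [NormedAlgebra ℂ B] (R : B →L[ℂ] A) :
    StrongDual ℂ A →L[ℂ] StrongDual ℂ B :=
  (ContinuousLinearMap.compSL B A ℂ (RingHom.id ℂ) (RingHom.id ℂ)).flip R

lemma precompDual_apply {A B : Type*} [NormedCommRing A] [NormedAlgebra ℂ A]
    [NormedCommRing B] [NormedAlgebra ℂ B] (R : B →L[ℂ] A) (T : StrongDual ℂ A) :
    precompDual R T = T.comp R := rfl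

/-- for a surjective continuous algebra homomorphism `R : B → A` whose adjoint
`R*` is bounded below, `T ∈ AP(A)` implies `R*(T) ∈ AP(B)`; conversely, if every `u` in the
closed unit ball of `A` lifts to `v ∈ B` with `‖v‖ ≤ C + 1` and `R v = u`, then
`R*(T) ∈ AP(B)` implies `T ∈ AP(A)`. -/
theorem AP_transfer_along_quotient
    (A B : Type*) [NormedCommRing A] [NormedAlgebra ℂ A] [CompleteSpace A]
    [NormedCommRing B] [NormedAlgebra ℂ B] [CompleteSpace B]
    (R : B →L[ℂ] A) (hmul : ∀ a b : B, R (a * b) = R a * R b)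
    (hsurj : Function.Surjective R)
    (hbelow : ∃ c : ℝ, 0 < c ∧ ∀ T : StrongDual ℂ A, c * ‖T‖ ≤ ‖T.comp R‖) :
    (∀ T : StrongDual ℂ A, IsAP T → IsAP (T.comp R)) ∧
      (∀ C : ℝ, (∀ u : A, ‖u‖ ≤ 1 → ∃ v : B, R v = u ∧ ‖v‖ ≤ C + 1) →
        ∀ T : StrongDual ℂ A, IsAP (T.comp R) → IsAP T) := by
  -- the fundamental module identity:  (dualAct (R v) T) ∘ R = dualAct v (T ∘ R)
  have key : ∀ (v : B) (T : StrongDual ℂ A),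
      (dualAct (R v) T).comp R = dualAct v (T.comp R) := by
    intro v T
    ext w
    simp [dualAct_apply, hmul]
  constructor
  · -- forward direction
    intro T hT
    have hK : IsCompact ((precompDual R) ''
        closure {S : StrongDual ℂ A | ∃ u : A, ‖u‖ ≤ ‖R‖ ∧ S = dualAct u T}) :=
      (isCompact_closure_orbit_scaled T hT ‖R‖).image (precompDual R).continuous
    have hsub : {S : StrongDual ℂ B | ∃ v : B, ‖v‖ ≤ 1 ∧ S = dualAct v (T.comp R)} ⊆
        (precompDual R) ''
        closure {S : StrongDual ℂ A | ∃ u : A, ‖u‖ ≤ ‖R‖ ∧ S = dualAct u T} := by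
      rintro S ⟨v, hv, rfl⟩
      refine ⟨dualAct (R v) T, subset_closure ⟨R v, ?_, rfl⟩, ?_⟩
      · calc ‖R v‖ ≤ ‖R‖ * ‖v‖ := R.le_opNorm v
          _ ≤ ‖R‖ * 1 := by
              exact mul_le_mul_of_nonneg_left hv (norm_nonneg R)
          _ = ‖R‖ := mul_one _
      · rw [precompDual_apply, key]
    exact hK.of_isClosed_subset isClosed_closure (closure_minimal hsub hK.isClosed)
  · -- reverse direction
    intro C hlift T hTR
    obtain ⟨c, hc, hineq⟩ := hbelow
    -- precompDual R is antilipschitz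
    have hanti : AntilipschitzWith (⟨c, hc.le⟩ : NNReal)⁻¹ (precompDual R) := by
      apply (precompDual R).antilipschitz_of_bound
      intro S
      change ‖S‖ ≤ c⁻¹ * ‖(precompDual R) S‖
      rw [← div_eq_inv_mul, le_div_iff₀ hc, mul_comm]
      exact hineq S
    have hui : IsUniformInducing (precompDual R) :=
      hanti.isUniformInducing (precompDual R).uniformContinuous
    -- the image of the orbit of T lies in the (C+1)-orbit of T ∘ R
    have hKB : IsCompact
        (closure {S : StrongDual ℂ B | ∃ v : B, ‖v‖ ≤ C + 1 ∧ S = dualAct v (T.comp R)}) :=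
      isCompact_closure_orbit_scaled (T.comp R) hTR (C + 1)
    have himg : (precompDual R) '' {S : StrongDual ℂ A | ∃ u : A, ‖u‖ ≤ 1 ∧ S = dualAct u T} ⊆
        closure {S : StrongDual ℂ B | ∃ v : B, ‖v‖ ≤ C + 1 ∧ S = dualAct v (T.comp R)} := by
      rintro S ⟨S', ⟨u, hu, rfl⟩, rfl⟩
      obtain ⟨v, hv, hvnorm⟩ := hlift u hu
      refine subset_closure ⟨v, hvnorm, ?_⟩
      rw [precompDual_apply, ← hv, key]
    -- hence the orbit of T is totally bounded, so its closure is compact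
    have htb : TotallyBounded {S : StrongDual ℂ A | ∃ u : A, ‖u‖ ≤ 1 ∧ S = dualAct u T} := by
      rw [← totallyBounded_image_iff hui]
      exact (hKB.totallyBounded).subset himg
    have : IsComplete (closure {S : StrongDual ℂ A | ∃ u : A, ‖u‖ ≤ 1 ∧ S = dualAct u T}) :=
      isClosed_closure.isComplete
    exact TotallyBounded.isCompact_of_isClosed htb.closure isClosed_closure
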